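/- Let f : ℍ² → ℍ be holomorphic with f(λ,λ) = λ for all λ ∈ ℍ. Then ∂f/∂z(λ,λ) is a constant α ∈ [0,1] independent of λ, and ∂f/∂w(λ,λ) = 1 − α for all λ. -/

import Mathlib

open Complex Metric Set MeasureTheory intervalIntegral Real


private lemma exists_unimodular (a : ℂ) : ∃ u : ℂ, ‖u‖ = 1 ∧ u * a = (‖a‖ : ℂ) := by
  rcases eq_or_ne a 0 with rfl | ha
  · exact ⟨1, by simp, by simp⟩
  · refine ⟨(starRingEnd ℂ) a / (‖a‖ : ℂ), ?_, ?_⟩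
    · have hc : ‖(starRingEnd ℂ) a‖ = ‖a‖ := by
        simp [Complex.norm_conj]
      rw [norm_div, hc, Complex.norm_real, Real.norm_of_nonneg (norm_nonneg a),
        div_self (norm_ne_zero_iff.mpr ha)]
    · have hns : ((Complex.normSq a : ℝ) : ℂ) = ((‖a‖^2 : ℝ) : ℂ) := by
        norm_cast
        rw [Complex.sq_norm]
      have hne : (‖a‖ : ℂ) ≠ 0 := by
        simpa using norm_ne_zero_iff.mpr ha
      rw [div_mul_eq_mul_div, mul_comm, Complex.mul_conj, hns, div_eq_iff hne]
      push_cast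
      ring

private lemma k_im {l : ℂ} (hl : 0 < l.im) {w : ℂ} (hw : ‖w‖ < 1) :
    0 < ((l - (starRingEnd ℂ) l * w) / (1 - w)).im := by
  have hw2 : w.re ^ 2 + w.im ^ 2 < 1 := by
    have h1 : ‖w‖ < 1 := by exact hw
    nlinarith [norm_nonneg w, Complex.sq_norm w, Complex.normSq_apply w]
  have hQ : 0 < Complex.normSq (1 - w) := by
    rw [Complex.normSq_pos]
    intro h
    have : w = 1 := by linear_combination -h
    simp [this] at hw
  rw [Complex.div_im, div_sub_div_same, lt_div_iff₀ hQ]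
  simp [Complex.normSq_apply, Complex.sub_re, Complex.sub_im, Complex.mul_re, Complex.mul_im]
  nlinarith [hl, hw2]

private lemma c_maps {l z : ℂ} (hl : 0 < l.im) (hz : 0 < z.im) :
    ‖(z - l) / (z - (starRingEnd ℂ) l)‖ < 1 := by
  have hnum : Complex.normSq (z - l) < Complex.normSq (z - (starRingEnd ℂ) l) := by
    simp [Complex.normSq_apply, Complex.sub_re, Complex.sub_im]
    nlinarith
  have hden : (0:ℝ) < ‖z - (starRingEnd ℂ) l‖ := by
    rw [norm_pos_iff]
    intro h
    have := congrArg Complex.im h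
    simp [Complex.sub_im] at this
    linarith
  rw [norm_div, div_lt_one hden]
  have := Complex.sq_norm (z - l)
  have := Complex.sq_norm (z - (starRingEnd ℂ) l)
  nlinarith [norm_nonneg (z - l), norm_nonneg (z - (starRingEnd ℂ) l)]

private lemma sub_conj_ne {l : ℂ} (hl : 0 < l.im) : l - (starRingEnd ℂ) l ≠ 0 := by
  intro h
  have := congrArg Complex.im h
  simp [Complex.sub_im] at this
  linarith

private lemma hasDerivAt_k {l : ℂ} :
    HasDerivAt (fun w : ℂ => (l - (starRingEnd ℂ) l * w) / (1 - w)) (l - (starRingEnd ℂ) l) 0 := by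
  have h1 : HasDerivAt (fun w : ℂ => l - (starRingEnd ℂ) l * w) (-(starRingEnd ℂ) l) 0 := by
    simpa using ((hasDerivAt_id (0:ℂ)).const_mul ((starRingEnd ℂ) l)).const_sub l
  have h2 : HasDerivAt (fun w : ℂ => 1 - w) (-1 : ℂ) 0 := by
    simpa using (hasDerivAt_id (0:ℂ)).const_sub 1
  have := h1.div h2 (by norm_num)
  refine this.congr_deriv ?_
  ring

private lemma diffAt_k {l w : ℂ} (hw : ‖w‖ < 1) :
    DifferentiableAt ℂ (fun w : ℂ => (l - (starRingEnd ℂ) l * w) / (1 - w)) w := by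
  apply DifferentiableAt.div (by fun_prop) (by fun_prop)
  intro h
  have : w = 1 := by linear_combination -h
  simp [this] at hw

private lemma hasDerivAt_c {l : ℂ} (hl : 0 < l.im) :
    HasDerivAt (fun z : ℂ => (z - l) / (z - (starRingEnd ℂ) l)) (1 / (l - (starRingEnd ℂ) l)) l := by
  have h1 : HasDerivAt (fun z : ℂ => z - l) 1 l := by simpa using (hasDerivAt_id l).sub_const l
  have h2 : HasDerivAt (fun z : ℂ => z - (starRingEnd ℂ) l) 1 l := by
    simpa using (hasDerivAt_id l).sub_const ((starRingEnd ℂ) l)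
  have := h1.div h2 (sub_conj_ne hl)
  refine this.congr_deriv ?_
  rw [sub_self, zero_mul, sub_zero, one_mul, sq, div_mul_eq_div_div,
    div_self (sub_conj_ne hl)]

private lemma diffAt_c {l z : ℂ} (hl : 0 < l.im) (hz : 0 < z.im) :
    DifferentiableAt ℂ (fun z : ℂ => (z - l) / (z - (starRingEnd ℂ) l)) z := by
  apply DifferentiableAt.div (by fun_prop) (by fun_prop)
  intro h
  have := congrArg Complex.im h
  simp [Complex.sub_im] at this
  linarith

private lemma sp_core (f : ℂ → ℂ → ℂ)
    (hf : DifferentiableOn ℂ (fun p : ℂ × ℂ => f p.1 p.2)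
      {p : ℂ × ℂ | 0 < p.1.im ∧ 0 < p.2.im})
    (hmaps : ∀ z w : ℂ, 0 < z.im → 0 < w.im → 0 < (f z w).im)
    (hdiag : ∀ l : ℂ, 0 < l.im → f l l = l)
    {l : ℂ} (hl : 0 < l.im)
    {L : ℂ × ℂ →L[ℂ] ℂ} (hL : HasFDerivAt (fun p : ℂ × ℂ => f p.1 p.2) L (l, l)) :
    ‖L (1, 0)‖ + ‖L (0, 1)‖ ≤ 1 := by
  set a : ℂ := L (1, 0) with ha
  set b : ℂ := L (0, 1) with hb
  obtain ⟨u, hu1, hua⟩ := exists_unimodular a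
  obtain ⟨v, hv1, hvb⟩ := exists_unimodular b
  set k : ℂ → ℂ := fun w => (l - (starRingEnd ℂ) l * w) / (1 - w) with hk
  set c : ℂ → ℂ := fun z => (z - l) / (z - (starRingEnd ℂ) l) with hc
  set g : ℂ → ℂ := fun w => c (f (k (u * w)) (k (v * w))) with hg
  have hDopen : IsOpen {p : ℂ × ℂ | 0 < p.1.im ∧ 0 < p.2.im} := by
    apply IsOpen.inter
    · exact isOpen_lt continuous_const (Complex.continuous_im.comp continuous_fst)
    · exact isOpen_lt continuous_const (Complex.continuous_im.comp continuous_snd)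
  have hk0 : k 0 = l := by simp [hk]
  have hmem : ∀ w : ℂ, ‖w‖ < 1 → (k (u * w), k (v * w)) ∈ {p : ℂ × ℂ | 0 < p.1.im ∧ 0 < p.2.im} := by
    intro w hw
    constructor
    · exact k_im hl (by rw [norm_mul, hu1, one_mul]; exact hw)
    · exact k_im hl (by rw [norm_mul, hv1, one_mul]; exact hw)
  -- g maps ball to ball
  have hmapsg : MapsTo g (ball 0 1) (ball 0 1) := by
    intro w hw
    rw [mem_ball_zero_iff] at hw ⊢
    obtain ⟨h1, h2⟩ := hmem w hw
    exact c_maps hl (hmaps _ _ h1 h2)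
  have hg0 : g 0 = 0 := by
    simp only [hg, mul_zero, hk0, hdiag l hl, hc]
    simp
  -- g differentiable on ball
  have hdiffg : DifferentiableOn ℂ g (ball 0 1) := by
    intro w hw
    rw [mem_ball_zero_iff] at hw
    apply DifferentiableAt.differentiableWithinAt
    obtain ⟨h1, h2⟩ := hmem w hw
    have hku : DifferentiableAt ℂ (fun w => k (u * w)) w :=
      DifferentiableAt.comp w (diffAt_k (by rw [norm_mul, hu1, one_mul]; exact hw))
        (differentiableAt_id.const_mul u)
    have hkv : DifferentiableAt ℂ (fun w => k (v * w)) w :=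
      DifferentiableAt.comp w (diffAt_k (by rw [norm_mul, hv1, one_mul]; exact hw))
        (differentiableAt_id.const_mul v)
    have hF : DifferentiableAt ℂ (fun p : ℂ × ℂ => f p.1 p.2) (k (u * w), k (v * w)) :=
      hf.differentiableAt (hDopen.mem_nhds (hmem w hw))
    have hcomp : DifferentiableAt ℂ (fun w => f (k (u * w)) (k (v * w))) w :=
      hF.comp (g := fun p : ℂ × ℂ => f p.1 p.2) w (hku.prodMk hkv)
    exact (diffAt_c hl (hmaps _ _ h1 h2)).comp w hcomp
  -- derivative of g at 0
  have hdg : HasDerivAt g ((1 / (l - (starRingEnd ℂ) l)) *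
      (L ((l - (starRingEnd ℂ) l) * u, (l - (starRingEnd ℂ) l) * v))) 0 := by
    have hku : HasDerivAt (fun w => k (u * w)) ((l - (starRingEnd ℂ) l) * u) 0 := by
      have hmul : HasDerivAt (fun w : ℂ => u * w) u 0 := by
        simpa using (hasDerivAt_id (0:ℂ)).const_mul u
      have hkd : HasDerivAt k (l - (starRingEnd ℂ) l) (u * 0) := by
        rw [mul_zero]; exact hasDerivAt_k
      exact hkd.comp 0 hmul
    have hkv : HasDerivAt (fun w => k (v * w)) ((l - (starRingEnd ℂ) l) * v) 0 := by
      have hmul : HasDerivAt (fun w : ℂ => v * w) v 0 := by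
        simpa using (hasDerivAt_id (0:ℂ)).const_mul v
      have hkd : HasDerivAt k (l - (starRingEnd ℂ) l) (v * 0) := by
        rw [mul_zero]; exact hasDerivAt_k
      exact hkd.comp 0 hmul
    have hpair : HasDerivAt (fun w => (k (u * w), k (v * w)))
        ((l - (starRingEnd ℂ) l) * u, (l - (starRingEnd ℂ) l) * v) 0 := hku.prodMk hkv
    have hLat : HasFDerivAt (fun p : ℂ × ℂ => f p.1 p.2) L (k (u * 0), k (v * 0)) := by
      rw [mul_zero, mul_zero, hk0]; exact hL
    have hFcomp : HasDerivAt (fun w => f (k (u * w)) (k (v * w)))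
        (L ((l - (starRingEnd ℂ) l) * u, (l - (starRingEnd ℂ) l) * v)) 0 :=
      hLat.comp_hasDerivAt (l := fun p : ℂ × ℂ => f p.1 p.2) 0 hpair
    have hcd : HasDerivAt c (1 / (l - (starRingEnd ℂ) l)) (f (k (u * 0)) (k (v * 0))) := by
      rw [mul_zero, mul_zero, hk0, hdiag l hl]; exact hasDerivAt_c hl
    exact hcd.comp 0 hFcomp
  -- Schwarz
  have hsch := Complex.norm_deriv_le_one_of_mapsTo_ball hdiffg
    (by rw [hg0]; exact hmapsg.mono_right ball_subset_closedBall) one_pos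
  have hne := sub_conj_ne hl
  have hsplit : ((l - (starRingEnd ℂ) l) * u, (l - (starRingEnd ℂ) l) * v)
      = ((l - (starRingEnd ℂ) l) * u) • ((1:ℂ), (0:ℂ))
        + ((l - (starRingEnd ℂ) l) * v) • ((0:ℂ), (1:ℂ)) := by
    simp [Prod.ext_iff]
  have hval : deriv g 0 = ((‖a‖ + ‖b‖ : ℝ) : ℂ) := by
    rw [hdg.deriv, hsplit, map_add, _root_.map_smul, _root_.map_smul, smul_eq_mul, smul_eq_mul, ← ha, ← hb]
    have h9 : 1 / (l - (starRingEnd ℂ) l) * ((l - (starRingEnd ℂ) l) * u * a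
        + (l - (starRingEnd ℂ) l) * v * b) = u * a + v * b := by
      field_simp
    rw [h9, hua, hvb]
    push_cast
    ring
  have h10 : ‖((‖a‖ + ‖b‖ : ℝ) : ℂ)‖ = ‖a‖ + ‖b‖ := by
    rw [Complex.norm_real, Real.norm_eq_abs]
    exact abs_of_nonneg (by positivity)
  rw [hval, h10] at hsch
  exact hsch


private lemma slice_diff (f : ℂ → ℂ → ℂ)
    (hf : DifferentiableOn ℂ (fun p : ℂ × ℂ => f p.1 p.2)
      {p : ℂ × ℂ | 0 < p.1.im ∧ 0 < p.2.im})
    {w : ℂ} (hw : 0 < w.im) :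
    DifferentiableOn ℂ (fun ζ : ℂ => f ζ w) {ζ : ℂ | 0 < ζ.im} := fun ζ hζ =>
  (hf (ζ, w) ⟨hζ, hw⟩).comp (f := fun ζ : ℂ => ((ζ, w) : ℂ × ℂ)) ζ
    (differentiableWithinAt_id.prodMk (differentiableWithinAt_const w))
    (fun x hx => ⟨hx, hw⟩)

private lemma slice_diff2 (f : ℂ → ℂ → ℂ)
    (hf : DifferentiableOn ℂ (fun p : ℂ × ℂ => f p.1 p.2)
      {p : ℂ × ℂ | 0 < p.1.im ∧ 0 < p.2.im})
    {z : ℂ} (hz : 0 < z.im) :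
    DifferentiableOn ℂ (fun ζ : ℂ => f z ζ) {ζ : ℂ | 0 < ζ.im} := fun ζ hζ =>
  (hf (z, ζ) ⟨hz, hζ⟩).comp ζ
    ((differentiableWithinAt_const z).prodMk differentiableWithinAt_id)
    (fun x hx => ⟨hz, hx⟩)

private lemma hDopen' : IsOpen {p : ℂ × ℂ | 0 < p.1.im ∧ 0 < p.2.im} :=
  IsOpen.inter (isOpen_lt continuous_const (Complex.continuous_im.comp continuous_fst))
    (isOpen_lt continuous_const (Complex.continuous_im.comp continuous_snd))

private lemma myFderivFst (f : ℂ → ℂ → ℂ)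
    (hf : DifferentiableOn ℂ (fun p : ℂ × ℂ => f p.1 p.2)
      {p : ℂ × ℂ | 0 < p.1.im ∧ 0 < p.2.im})
    {z w : ℂ} (hz : 0 < z.im) (hw : 0 < w.im) :
    fderiv ℂ (fun p : ℂ × ℂ => f p.1 p.2) (z, w) ((1:ℂ), (0:ℂ))
      = deriv (fun ζ => f ζ w) z := by
  have hmemp : ((z, w) : ℂ × ℂ) ∈ {p : ℂ × ℂ | 0 < p.1.im ∧ 0 < p.2.im} := ⟨hz, hw⟩
  have hd := (hf.differentiableAt (hDopen'.mem_nhds hmemp)).hasFDerivAt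
  have h1 : HasDerivAt (fun ζ : ℂ => ((ζ, w) : ℂ × ℂ)) ((1:ℂ), (0:ℂ)) z :=
    (hasDerivAt_id z).prodMk (hasDerivAt_const z w)
  exact (hd.comp_hasDerivAt_of_eq _ h1 rfl).deriv.symm

private lemma myFderivSnd (f : ℂ → ℂ → ℂ)
    (hf : DifferentiableOn ℂ (fun p : ℂ × ℂ => f p.1 p.2)
      {p : ℂ × ℂ | 0 < p.1.im ∧ 0 < p.2.im})
    {z w : ℂ} (hz : 0 < z.im) (hw : 0 < w.im) :
    fderiv ℂ (fun p : ℂ × ℂ => f p.1 p.2) (z, w) ((0:ℂ), (1:ℂ))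
      = deriv (fun ζ => f z ζ) w := by
  have hmemp : ((z, w) : ℂ × ℂ) ∈ {p : ℂ × ℂ | 0 < p.1.im ∧ 0 < p.2.im} := ⟨hz, hw⟩
  have hd := (hf.differentiableAt (hDopen'.mem_nhds hmemp)).hasFDerivAt
  have h1 : HasDerivAt (fun ζ : ℂ => ((z, ζ) : ℂ × ℂ)) ((0:ℂ), (1:ℂ)) w :=
    (hasDerivAt_const w z).prodMk (hasDerivAt_id w)
  exact (hd.comp_hasDerivAt_of_eq _ h1 rfl).deriv.symm

private lemma A_diffAt (f : ℂ → ℂ → ℂ)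
    (hf : DifferentiableOn ℂ (fun p : ℂ × ℂ => f p.1 p.2)
      {p : ℂ × ℂ | 0 < p.1.im ∧ 0 < p.2.im})
    {l₀ : ℂ} (hl₀ : 0 < l₀.im) :
    DifferentiableAt ℂ (fun l : ℂ =>
      fderiv ℂ (fun p : ℂ × ℂ => f p.1 p.2) (l, l) ((1:ℂ), (0:ℂ))) l₀ := by
  set r : ℝ := l₀.im / 16 with hrdef
  have hr : 0 < r := by positivity
  set ρ : ℝ := 2 * r with hρdef
  have hρ : 0 < ρ := by positivity
  have hl16 : l₀.im = 16 * r := by rw [hrdef]; ring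
  clear_value r
  clear_value ρ
  have fact1 : ∀ z : ℂ, z ∈ closedBall l₀ (8 * r) → 0 < z.im := by
    intro z hz
    rw [mem_closedBall, Complex.dist_eq] at hz
    have h2 : |(z - l₀).im| ≤ 8 * r := le_trans (Complex.abs_im_le_norm _) hz
    rw [Complex.sub_im] at h2
    linarith [(abs_le.mp h2).1]
  obtain ⟨C, hC⟩ : ∃ C, ∀ p ∈ (closedBall l₀ (8 * r)) ×ˢ (closedBall l₀ (8 * r)),
      ‖(fun p : ℂ × ℂ => f p.1 p.2) p‖ ≤ C := by
    apply IsCompact.exists_bound_of_continuousOn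
      ((isCompact_closedBall _ _).prod (isCompact_closedBall _ _))
    exact hf.continuousOn.mono (fun p hp => ⟨fact1 _ hp.1, fact1 _ hp.2⟩)
  have hDbound : ∀ z w : ℂ, z ∈ closedBall l₀ (7 * r) → w ∈ closedBall l₀ (7 * r) →
      ‖fderiv ℂ (fun p : ℂ × ℂ => f p.1 p.2) (z, w) ((1:ℂ), (1:ℂ))‖ ≤ 2 * (C / r) := by
    intro z w hzm hwm
    have hz : 0 < z.im := fact1 z (closedBall_subset_closedBall (by linarith) hzm)
    have hw : 0 < w.im := fact1 w (closedBall_subset_closedBall (by linarith) hwm)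
    have hsub : ∀ x : ℂ, x ∈ closedBall z r → x ∈ closedBall l₀ (8 * r) := by
      intro x hx
      rw [mem_closedBall] at hx hzm ⊢
      calc dist x l₀ ≤ dist x z + dist z l₀ := dist_triangle _ _ _
        _ ≤ r + 7 * r := add_le_add hx hzm
        _ = 8 * r := by ring
    have hsub' : ∀ x : ℂ, x ∈ closedBall w r → x ∈ closedBall l₀ (8 * r) := by
      intro x hx
      rw [mem_closedBall] at hx hwm ⊢
      calc dist x l₀ ≤ dist x w + dist w l₀ := dist_triangle _ _ _
        _ ≤ r + 7 * r := add_le_add hx hwm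
        _ = 8 * r := by ring
    have hb1 : ‖deriv (fun ζ => f ζ w) z‖ ≤ C / r := by
      apply Complex.norm_deriv_le_of_forall_mem_sphere_norm_le hr
      · refine ⟨(slice_diff f hf hw).mono ?_, (slice_diff f hf hw).continuousOn.mono ?_⟩
        · exact fun x hx => fact1 x (hsub x (ball_subset_closedBall hx))
        · rw [closure_ball z hr.ne']
          exact fun x hx => fact1 x (hsub x hx)
      · intro x hx
        exact hC (x, w) ⟨hsub x (sphere_subset_closedBall hx),
          closedBall_subset_closedBall (by linarith) hwm⟩
    have hb2 : ‖deriv (fun ζ => f z ζ) w‖ ≤ C / r := by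
      apply Complex.norm_deriv_le_of_forall_mem_sphere_norm_le hr
      · refine ⟨(slice_diff2 f hf hz).mono ?_, (slice_diff2 f hf hz).continuousOn.mono ?_⟩
        · exact fun x hx => fact1 x (hsub' x (ball_subset_closedBall hx))
        · rw [closure_ball w hr.ne']
          exact fun x hx => fact1 x (hsub' x hx)
      · intro x hx
        exact hC (z, x) ⟨closedBall_subset_closedBall (by linarith) hzm,
          hsub' x (sphere_subset_closedBall hx)⟩
    have hsplit : ((1:ℂ), (1:ℂ)) = ((1:ℂ), (0:ℂ)) + ((0:ℂ), (1:ℂ)) := by simp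
    rw [hsplit, map_add]
    calc ‖_ + _‖ ≤ ‖fderiv ℂ (fun p : ℂ × ℂ => f p.1 p.2) (z, w) ((1:ℂ), (0:ℂ))‖
        + ‖fderiv ℂ (fun p : ℂ × ℂ => f p.1 p.2) (z, w) ((0:ℂ), (1:ℂ))‖ := norm_add_le _ _
      _ ≤ C / r + C / r := by
          rw [myFderivFst f hf hz hw, myFderivSnd f hf hz hw]
          exact add_le_add hb1 hb2
      _ = 2 * (C / r) := by ring
  set K : ℝ → ℂ := fun θ =>
    (2 * (π : ℂ) * Complex.I)⁻¹ * (circleMap 0 ρ θ * Complex.I * ((circleMap 0 ρ θ) ^ 2)⁻¹)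
    with hKdef
  set Φ : ℂ → ℝ → ℂ := fun l θ => K θ * f (l + circleMap 0 ρ θ) l with hΦdef
  set Ψ : ℂ → ℝ → ℂ := fun l θ => K θ *
    fderiv ℂ (fun p : ℂ × ℂ => f p.1 p.2) (l + circleMap 0 ρ θ, l) ((1:ℂ), (1:ℂ)) with hΨdef
  have hKnorm : ∀ θ : ℝ, ‖K θ‖ = (2 * π)⁻¹ * ρ⁻¹ := by
    intro θ
    have hcm : ‖circleMap 0 ρ θ‖ = ρ := by
      rw [norm_circleMap_zero, abs_of_pos hρ]
    have h2pi : ‖(2 * (π : ℂ) * Complex.I)‖ = 2 * π := by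
      simp [_root_.abs_of_nonneg Real.pi_nonneg]
    rw [hKdef]
    rw [norm_mul, norm_inv, h2pi, norm_mul, norm_mul, norm_inv, norm_pow, hcm, Complex.norm_I]
    have hrr : ρ * 1 * (ρ ^ 2)⁻¹ = ρ⁻¹ := by
      field_simp
    rw [hrr]
  have hmem1 : ∀ (l : ℂ) (θ : ℝ), l ∈ ball l₀ r →
      l + circleMap 0 ρ θ ∈ closedBall l₀ (7 * r) := by
    intro l θ hl
    rw [mem_closedBall]
    have h1 : dist (l + circleMap 0 ρ θ) l = ρ := by
      rw [Complex.dist_eq]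
      have h0 : l + circleMap 0 ρ θ - l = circleMap 0 ρ θ := by ring
      rw [h0, norm_circleMap_zero, abs_of_pos hρ]
    calc dist (l + circleMap 0 ρ θ) l₀ ≤ dist (l + circleMap 0 ρ θ) l + dist l l₀ :=
        dist_triangle _ _ _
      _ ≤ ρ + r := by
          rw [h1]
          exact add_le_add le_rfl (le_of_lt (mem_ball.mp hl))
      _ ≤ 7 * r := by rw [hρdef]; linarith
  have hmem2 : ∀ l : ℂ, l ∈ ball l₀ r → l ∈ closedBall l₀ (7 * r) :=
    fun l hl => closedBall_subset_closedBall (by linarith) (ball_subset_closedBall hl)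
  have hpos1 : ∀ (l : ℂ) (θ : ℝ), l ∈ ball l₀ r → 0 < (l + circleMap 0 ρ θ).im :=
    fun l θ hl => fact1 _ (closedBall_subset_closedBall (by linarith) (hmem1 l θ hl))
  have hpos2 : ∀ l : ℂ, l ∈ ball l₀ r → 0 < l.im :=
    fun l hl => fact1 _ (closedBall_subset_closedBall (by linarith) (hmem2 l hl))
  have hKcont : Continuous K := by
    have h1 : Continuous fun θ : ℝ => ((circleMap 0 ρ θ) ^ 2)⁻¹ :=
      ((continuous_circleMap 0 ρ).pow 2).inv₀
        (fun θ => pow_ne_zero _ (circleMap_ne_center hρ.ne'))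
    exact continuous_const.mul (((continuous_circleMap 0 ρ).mul continuous_const).mul h1)
  have hfc : ∀ l : ℂ, l ∈ ball l₀ r → Continuous (fun θ : ℝ => f (l + circleMap 0 ρ θ) l) := by
    intro l hl
    have hγ : Continuous (fun θ : ℝ => ((l + circleMap 0 ρ θ, l) : ℂ × ℂ)) :=
      (continuous_const.add (continuous_circleMap 0 ρ)).prodMk continuous_const
    have hmemθ : ∀ θ : ℝ, ((l + circleMap 0 ρ θ, l) : ℂ × ℂ)
        ∈ {p : ℂ × ℂ | 0 < p.1.im ∧ 0 < p.2.im} :=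
      fun θ => ⟨hpos1 l θ hl, hpos2 l hl⟩
    exact hf.continuousOn.comp_continuous hγ hmemθ
  have hcont : ∀ l : ℂ, l ∈ ball l₀ r → Continuous (Φ l) := by
    intro l hl
    exact hKcont.mul (hfc l hl)
  -- Cauchy representation
  have hrep : ∀ l ∈ ball l₀ r,
      fderiv ℂ (fun p : ℂ × ℂ => f p.1 p.2) (l, l) ((1:ℂ), (0:ℂ))
        = ∫ θ in (0:ℝ)..(2*π), Φ l θ := by
    intro l hl
    have hlim := hpos2 l hl
    have hsubl : ∀ x : ℂ, x ∈ closedBall l ρ → x ∈ closedBall l₀ (8 * r) := by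
      intro x hx
      rw [mem_closedBall] at hx ⊢
      calc dist x l₀ ≤ dist x l + dist l l₀ := dist_triangle _ _ _
        _ ≤ ρ + r := add_le_add hx (le_of_lt (mem_ball.mp hl))
        _ ≤ 8 * r := by rw [hρdef]; linarith
    have hdc : DiffContOnCl ℂ (fun z => f z l) (ball l ρ) := by
      refine ⟨(slice_diff f hf hlim).mono ?_, (slice_diff f hf hlim).continuousOn.mono ?_⟩
      · exact fun x hx => fact1 x (hsubl x (ball_subset_closedBall hx))
      · rw [closure_ball l hρ.ne']
        exact fun x hx => fact1 x (hsubl x hx)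
    have hcf : deriv (fun z => f z l) l
        = (2 * (π : ℂ) * Complex.I)⁻¹ • ∮ z in C(l, ρ), (z - l) ^ (-2 : ℤ) • f z l := by
      have h := hdc.deriv_eq_smul_circleIntegral hρ
      have he : (∮ z in C(l, ρ), (z - l) ^ (-2 : ℤ) • f z l)
          = ∮ z in C(l, ρ), (1 / (z - l) ^ 2) • f z l := by
        simp only [zpow_neg, zpow_ofNat, one_div]
      rw [he, h, smul_smul, inv_mul_cancel₀ (by simp [Real.pi_ne_zero, Complex.I_ne_zero]),
        one_smul]
    rw [myFderivFst f hf hlim hlim, hcf]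
    have hunfold : (∮ z in C(l, ρ), (z - l) ^ (-2 : ℤ) • f z l)
        = ∫ θ in (0:ℝ)..(2*π), deriv (circleMap l ρ) θ •
            ((circleMap l ρ θ - l) ^ (-2:ℤ) • f (circleMap l ρ θ) l) := rfl
    rw [hunfold, ← intervalIntegral.integral_smul]
    apply intervalIntegral.integral_congr
    intro θ _
    have hmap : circleMap l ρ θ = l + circleMap 0 ρ θ := by simp [circleMap]
    beta_reduce
    rw [deriv_circleMap]
    simp only [smul_eq_mul, hΦdef, hKdef]
    rw [circleMap_sub_center, hmap, zpow_neg, zpow_two, ← sq]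
    ring
  -- parametric differentiation
  have key := intervalIntegral.hasDerivAt_integral_of_dominated_loc_of_deriv_le
    (F := Φ) (F' := Ψ) (x₀ := l₀) (s := ball l₀ r) (a := (0:ℝ)) (b := 2*π) (μ := volume)
    (bound := fun _ => (2*π)⁻¹ * ρ⁻¹ * (2 * (C / r)))
    (ball_mem_nhds l₀ hr)
    (by filter_upwards [ball_mem_nhds l₀ hr] with l hl using (hcont l hl).aestronglyMeasurable)
    ((hcont l₀ (mem_ball_self hr)).intervalIntegrable _ _)
    (by
      apply Measurable.aestronglyMeasurable
      apply Measurable.mul hKcont.measurable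
      have hγ : Measurable (fun θ : ℝ => ((l₀ + circleMap 0 ρ θ, l₀) : ℂ × ℂ)) :=
        ((continuous_const.add (continuous_circleMap 0 ρ)).prodMk continuous_const).measurable
      exact Measurable.comp
        (measurable_fderiv_apply_const (𝕜 := ℂ) (f := fun p : ℂ × ℂ => f p.1 p.2)
          ((1:ℂ), (1:ℂ))) hγ)
    (by
      refine ae_of_all _ (fun θ _ l hl => ?_)
      simp only [hΨdef]
      rw [norm_mul, hKnorm θ]
      have hnn : (0:ℝ) ≤ (2*π)⁻¹ * ρ⁻¹ :=
        mul_nonneg (inv_nonneg.mpr (by positivity)) (inv_nonneg.mpr hρ.le)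
      exact mul_le_mul_of_nonneg_left (hDbound _ _ (hmem1 l θ hl) (hmem2 l hl)) hnn)
    intervalIntegrable_const
    (by
      refine ae_of_all _ (fun θ _ l hl => ?_)
      have hinner : HasDerivAt (fun l : ℂ => ((l + circleMap 0 ρ θ, l) : ℂ × ℂ))
          ((1:ℂ), (1:ℂ)) l :=
        ((hasDerivAt_id l).add_const _).prodMk (hasDerivAt_id l)
      have hmemp : ((l + circleMap 0 ρ θ, l) : ℂ × ℂ)
          ∈ {p : ℂ × ℂ | 0 < p.1.im ∧ 0 < p.2.im} := ⟨hpos1 l θ hl, hpos2 l hl⟩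
      have hFd := (hf.differentiableAt (hDopen'.mem_nhds hmemp)).hasFDerivAt
      have hcomp := hFd.comp_hasDerivAt_of_eq _ hinner rfl
      exact hcomp.const_mul (K θ))
  have heq : (fun l : ℂ => fderiv ℂ (fun p : ℂ × ℂ => f p.1 p.2) (l, l) ((1:ℂ), (0:ℂ)))
      =ᶠ[nhds l₀] (fun l : ℂ => ∫ θ in (0:ℝ)..(2*π), Φ l θ) := by
    filter_upwards [ball_mem_nhds l₀ hr] with l hl using hrep l hl
  exact heq.differentiableAt_iff.mpr key.2.differentiableAt

/-- Let `f : ℍ² → ℍ` be holomorphic with `f(λ,λ) = λ`. Then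
`∂f/∂z(λ,λ)` is a constant `α ∈ [0,1]` independent of `λ`, and `∂f/∂w(λ,λ) = 1 − α`. -/
theorem bidisk_diagonal_partials (f : ℂ → ℂ → ℂ)
    (hf : DifferentiableOn ℂ (fun p : ℂ × ℂ => f p.1 p.2)
      {p : ℂ × ℂ | 0 < p.1.im ∧ 0 < p.2.im})
    (hmaps : ∀ z w : ℂ, 0 < z.im → 0 < w.im → 0 < (f z w).im)
    (hdiag : ∀ l : ℂ, 0 < l.im → f l l = l) :
    ∃ α : ℝ, 0 ≤ α ∧ α ≤ 1 ∧
      ∀ l : ℂ, 0 < l.im →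
        deriv (fun z => f z l) l = (α : ℂ) ∧
        deriv (fun w => f l w) l = 1 - (α : ℂ) := by
  have hUopen : IsOpen {z : ℂ | 0 < z.im} := isOpen_lt continuous_const Complex.continuous_im
  have hdiffAt : ∀ l : ℂ, 0 < l.im →
      DifferentiableAt ℂ (fun p : ℂ × ℂ => f p.1 p.2) (l, l) := by
    intro l hl
    have hmemp : ((l, l) : ℂ × ℂ) ∈ {p : ℂ × ℂ | 0 < p.1.im ∧ 0 < p.2.im} := ⟨hl, hl⟩
    exact hf.differentiableAt (hDopen'.mem_nhds hmemp)
  set A : ℂ → ℂ := fun l => fderiv ℂ (fun p : ℂ × ℂ => f p.1 p.2) (l, l) ((1:ℂ), (0:ℂ)) with hA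
  set B : ℂ → ℂ := fun l => fderiv ℂ (fun p : ℂ × ℂ => f p.1 p.2) (l, l) ((0:ℂ), (1:ℂ)) with hB
  have hderiv1 : ∀ l : ℂ, 0 < l.im → deriv (fun z => f z l) l = A l :=
    fun l hl => (myFderivFst f hf hl hl).symm
  have hderiv2 : ∀ l : ℂ, 0 < l.im → deriv (fun w => f l w) l = B l :=
    fun l hl => (myFderivSnd f hf hl hl).symm
  have hsum : ∀ l : ℂ, 0 < l.im → A l + B l = 1 := by
    intro l hl
    have h1 : HasDerivAt (fun z : ℂ => ((z, z) : ℂ × ℂ)) ((1:ℂ), (1:ℂ)) l :=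
      (hasDerivAt_id l).prodMk (hasDerivAt_id l)
    have h2 : HasDerivAt (fun z : ℂ => f z z)
        (fderiv ℂ (fun p : ℂ × ℂ => f p.1 p.2) (l, l) ((1:ℂ), (1:ℂ))) l :=
      (hdiffAt l hl).hasFDerivAt.comp_hasDerivAt_of_eq _ h1 rfl
    have h3 : (fun z : ℂ => f z z) =ᶠ[nhds l] id := by
      filter_upwards [hUopen.mem_nhds hl] with z hz
      exact hdiag z hz
    have h4 : HasDerivAt (fun z : ℂ => f z z) 1 l :=
      (hasDerivAt_id l).congr_of_eventuallyEq h3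
    have h5 := h2.unique h4
    have h6 : ((1:ℂ), (1:ℂ)) = ((1:ℂ), (0:ℂ)) + ((0:ℂ), (1:ℂ)) := by simp
    calc A l + B l = fderiv ℂ (fun p : ℂ × ℂ => f p.1 p.2) (l, l) ((1:ℂ), (1:ℂ)) := by
          rw [h6, map_add]
      _ = 1 := h5
  have hreal : ∀ l : ℂ, 0 < l.im → (A l).im = 0 ∧ 0 ≤ (A l).re ∧ (A l).re ≤ 1 := by
    intro l hl
    have hsp : ‖A l‖ + ‖B l‖ ≤ 1 :=
      sp_core f hf hmaps hdiag hl (hdiffAt l hl).hasFDerivAt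
    have h1 := hsum l hl
    have hre : (A l).re + (B l).re = 1 := by
      have := congrArg Complex.re h1
      simpa using this
    have hra : (A l).re ≤ ‖A l‖ := by
      exact Complex.re_le_norm _
    have hrb : (B l).re ≤ ‖B l‖ := by
      exact Complex.re_le_norm _
    have hEa : ‖A l‖ = (A l).re := by linarith
    have him : (A l).im = 0 := by
      have h7 : ‖A l‖ ^ 2 = (A l).re ^ 2 + (A l).im ^ 2 := by
        rw [Complex.sq_norm, Complex.normSq_apply]; ring
      have h8 : ‖A l‖ = (A l).re := by exact hEa
      rw [h8] at h7
      have h9 : (A l).im ^ 2 = 0 := by linarith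
      exact pow_eq_zero_iff (by norm_num : (2:ℕ) ≠ 0) |>.mp h9
    refine ⟨him, by rw [← hEa]; exact norm_nonneg _, ?_⟩
    have : 0 ≤ (B l).re := by linarith [norm_nonneg (B l)]
    linarith
  have hAan : AnalyticOnNhd ℂ A {z : ℂ | 0 < z.im} := by
    have hAdiff : DifferentiableOn ℂ A {z : ℂ | 0 < z.im} :=
      fun l hl => (A_diffAt f hf hl).differentiableWithinAt
    exact hAdiff.analyticOnNhd hUopen
  have hpre : IsPreconnected {z : ℂ | 0 < z.im} := (convex_halfSpace_im_gt 0).isPreconnected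
  rcases hAan.is_constant_or_isOpen hpre with ⟨w, hw⟩ | hopen
  · have hI : (0:ℝ) < Complex.I.im := by simp
    obtain ⟨him, h0, h1⟩ := hreal Complex.I hI
    have hwI : A Complex.I = w := hw Complex.I hI
    refine ⟨w.re, ?_, ?_, ?_⟩
    · rw [← hwI]; exact h0
    · rw [← hwI]; exact h1
    · intro l hl
      have hAl : A l = (w.re : ℂ) := by
        rw [hw l hl]
        apply Complex.ext
        · simp
        · simp [← hwI, him]
      constructor
      · rw [hderiv1 l hl, hAl]
      · rw [hderiv2 l hl]
        have hs := hsum l hl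
        have hBl : B l = 1 - A l := by linear_combination hs
        rw [hBl, hAl]
  · exfalso
    have himg : IsOpen (A '' {z : ℂ | 0 < z.im}) := hopen _ subset_rfl hUopen
    have hI : (0:ℝ) < Complex.I.im := by simp
    have hmemI : A Complex.I ∈ A '' {z : ℂ | 0 < z.im} := ⟨Complex.I, hI, rfl⟩
    obtain ⟨R, hR, hball⟩ := Metric.isOpen_iff.mp himg _ hmemI
    have hpt : A Complex.I + ((R / 2 : ℝ) : ℂ) * Complex.I ∈ ball (A Complex.I) R := by
      rw [mem_ball, dist_eq_norm]
      have he : A Complex.I + ((R / 2 : ℝ) : ℂ) * Complex.I - A Complex.I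
          = ((R / 2 : ℝ) : ℂ) * Complex.I := by ring
      rw [he, norm_mul, Complex.norm_real, Complex.norm_I, mul_one,
        Real.norm_of_nonneg (by linarith)]
      linarith
    obtain ⟨l', hl', heq⟩ := hball hpt
    have him' := (hreal l' hl').1
    have himI := (hreal Complex.I hI).1
    have hcontr : (A l').im = R / 2 := by
      rw [heq]
      simp [Complex.add_im, Complex.mul_im, himI]
    rw [him'] at hcontr
    linarith
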